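/- For a Hankel matrix A with entries a_{ij} = w_{i+j} built from a sequence w, conditional positive definiteness of the (k+1)×(k+1) matrix (w_{i+j})_{i,j=0}^{k} is equivalent to positive semidefiniteness of the k×k Hankel matrix of second differences ((∇^2 w)_{i+j})_{i,j=0}^{k-1}, where (∇^2 w)_n = w_n - 2 w_{n+1} + w_{n+2}. -/

import Mathlib

open Finset

private def xm (Y : ℕ → ℝ) (i : ℕ) : ℝ := (if i = 0 then 0 else Y (i-1)) - Y i

private lemma sbp (k : ℕ) (Y : ℕ → ℝ) (hY : Y k = 0) (f : ℕ → ℝ) :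
    ∑ i ∈ range (k+1), xm Y i * f i = ∑ a ∈ range k, Y a * (f (a+1) - f a) := by
  have h1 : ∑ i ∈ range (k+1), xm Y i * f i
      = ∑ i ∈ range (k+1), ((if i = 0 then 0 else Y (i-1)) * f i - Y i * f i) := by
    refine sum_congr rfl fun i _ => ?_
    simp [xm, sub_mul]
  rw [h1, sum_sub_distrib,
    Finset.sum_range_succ' (fun i => (if i = 0 then 0 else Y (i-1)) * f i) k,
    Finset.sum_range_succ (fun i => Y i * f i) k]
  simp [hY, mul_sub, Finset.sum_sub_distrib]

private lemma main_id (k : ℕ) (w Y : ℕ → ℝ) (hY : Y k = 0) :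
    ∑ i ∈ range (k+1), ∑ j ∈ range (k+1), xm Y i * w (i+j) * xm Y j
    = ∑ a ∈ range k, ∑ b ∈ range k,
        Y a * (w (a+b) - 2 * w (a+b+1) + w (a+b+2)) * Y b := by
  have inner : ∀ i, ∑ j ∈ range (k+1), xm Y i * w (i+j) * xm Y j
      = xm Y i * ∑ b ∈ range k, Y b * (w (i+b+1) - w (i+b)) := by
    intro i
    have h1 := sbp k Y hY (fun j => w (i+j))
    simp only [← Nat.add_assoc] at h1
    rw [← h1, Finset.mul_sum]
    exact sum_congr rfl fun j _ => by ring
  calc ∑ i ∈ range (k+1), ∑ j ∈ range (k+1), xm Y i * w (i+j) * xm Y j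
      = ∑ i ∈ range (k+1),
          xm Y i * ∑ b ∈ range k, Y b * (w (i+b+1) - w (i+b)) :=
        sum_congr rfl fun i _ => inner i
    _ = ∑ a ∈ range k, Y a * ((∑ b ∈ range k, Y b * (w (a+1+b+1) - w (a+1+b)))
          - ∑ b ∈ range k, Y b * (w (a+b+1) - w (a+b))) :=
        sbp k Y hY (fun i => ∑ b ∈ range k, Y b * (w (i+b+1) - w (i+b)))
    _ = ∑ a ∈ range k, ∑ b ∈ range k,
        Y a * (w (a+b) - 2 * w (a+b+1) + w (a+b+2)) * Y b := by
        refine sum_congr rfl fun a _ => ?_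
        rw [← Finset.sum_sub_distrib, Finset.mul_sum]
        refine sum_congr rfl fun b _ => ?_
        have h1 : a+1+b+1 = a+b+2 := by ring
        have h2 : a+1+b = a+b+1 := by ring
        rw [h1, h2]; ring

private lemma conv2 (n : ℕ) (F : ℕ → ℕ → ℝ) :
    (∑ i : Fin n, ∑ j : Fin n, F i j) = ∑ i ∈ range n, ∑ j ∈ range n, F i j := by
  calc (∑ i : Fin n, ∑ j : Fin n, F i j)
      = ∑ i : Fin n, ∑ j ∈ range n, F i j :=
        Finset.sum_congr rfl fun i _ => Fin.sum_univ_eq_sum_range (fun j => F i j) n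
    _ = ∑ i ∈ range n, ∑ j ∈ range n, F i j :=
        Fin.sum_univ_eq_sum_range (fun i => ∑ j ∈ range n, F i j) n

theorem stmt14 (w : ℕ → ℝ) (k : ℕ) (hk : 1 ≤ k) :
    (∀ x : Fin (k+1) → ℝ, (∑ i, x i) = 0 →
        0 ≤ ∑ i : Fin (k+1), ∑ j : Fin (k+1), x i * w (i + j) * x j)
      ↔ (∀ y : Fin k → ℝ,
        0 ≤ ∑ i : Fin k, ∑ j : Fin k,
              y i * (w (i + j) - 2 * w (i + j + 1) + w (i + j + 2)) * y j) := by
  constructor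
  · intro h y
    set Y : ℕ → ℝ := fun a => if h : a < k then y ⟨a, h⟩ else 0 with hYdef
    have hYk : Y k = 0 := by simp [hYdef]
    have hsum : (∑ i : Fin (k+1), xm Y i) = 0 := by
      rw [Fin.sum_univ_eq_sum_range (fun i => xm Y i) (k+1)]
      have : ∑ i ∈ range (k+1), xm Y i = ∑ i ∈ range (k+1), xm Y i * 1 := by simp
      rw [this, sbp k Y hYk (fun _ => 1)]
      simp
    have h0 := h (fun i => xm Y i) hsum
    have hc : (∑ i : Fin (k+1), ∑ j : Fin (k+1),
        xm Y i * w (i + j) * xm Y j)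
        = ∑ a ∈ range k, ∑ b ∈ range k,
            Y a * (w (a+b) - 2 * w (a+b+1) + w (a+b+2)) * Y b := by
      rw [conv2 (k+1) (fun i j => xm Y i * w (i + j) * xm Y j)]
      exact main_id k w Y hYk
    rw [hc] at h0
    calc (0:ℝ) ≤ ∑ a ∈ range k, ∑ b ∈ range k,
            Y a * (w (a+b) - 2 * w (a+b+1) + w (a+b+2)) * Y b := h0
      _ = ∑ i : Fin k, ∑ j : Fin k,
            y i * (w (i + j) - 2 * w (i + j + 1) + w (i + j + 2)) * y j := by
          rw [← conv2 k (fun a b => Y a * (w (a+b) - 2 * w (a+b+1) + w (a+b+2)) * Y b)]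
          refine sum_congr rfl fun a ha => sum_congr rfl fun b hb => ?_
          have ha' : (a:ℕ) < k := a.isLt
          have hb' : (b:ℕ) < k := b.isLt
          simp [hYdef, ha', hb']
  · intro h x hx
    set x' : ℕ → ℝ := fun n => if h : n < k+1 then x ⟨n, h⟩ else 0 with hx'def
    set Y : ℕ → ℝ := fun a => -(∑ j ∈ range (a+1), x' j) with hYdef
    have hx'eq : ∀ i : Fin (k+1), x' i = x i := by
      intro i
      have : (i:ℕ) < k+1 := i.isLt
      simp only [hx'def]; exact dif_pos this
    have hYk : Y k = 0 := by
      have : ∑ j ∈ range (k+1), x' j = ∑ i : Fin (k+1), x i := by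
        rw [← Fin.sum_univ_eq_sum_range (fun i => x' i) (k+1)]
        exact sum_congr rfl fun i _ => hx'eq i
      simp [hYdef, this, hx]
    have hxm : ∀ i : ℕ, x' i = xm Y i := by
      intro i
      cases i with
      | zero => simp [xm, hYdef, Finset.sum_range_one]
      | succ n =>
          show x' (n+1) = (if n+1 = 0 then 0 else Y (n+1-1)) - Y (n+1)
          rw [if_neg (Nat.succ_ne_zero n)]
          simp only [Nat.add_sub_cancel, hYdef]
          rw [Finset.sum_range_succ (fun j => x' j) (n+1)]
          ring
    have hc : (∑ i : Fin (k+1), ∑ j : Fin (k+1), x i * w (i + j) * x j)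
        = ∑ a ∈ range k, ∑ b ∈ range k,
            Y a * (w (a+b) - 2 * w (a+b+1) + w (a+b+2)) * Y b := by
      rw [show (∑ i : Fin (k+1), ∑ j : Fin (k+1), x i * w (i + j) * x j)
          = ∑ i : Fin (k+1), ∑ j : Fin (k+1), xm Y i * w (i + j) * xm Y j from
        sum_congr rfl fun i _ => sum_congr rfl fun j _ => by
          rw [← hxm i, ← hxm j, hx'eq i, hx'eq j]]
      rw [conv2 (k+1) (fun i j => xm Y i * w (i + j) * xm Y j)]
      exact main_id k w Y hYk
    rw [hc]
    have h0 := h (fun a : Fin k => Y a)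
    calc (0:ℝ) ≤ ∑ i : Fin k, ∑ j : Fin k,
            Y i * (w (i + j) - 2 * w (i + j + 1) + w (i + j + 2)) * Y j := h0
      _ = ∑ a ∈ range k, ∑ b ∈ range k,
            Y a * (w (a+b) - 2 * w (a+b+1) + w (a+b+2)) * Y b :=
          conv2 k (fun a b => Y a * (w (a+b) - 2 * w (a+b+1) + w (a+b+2)) * Y b)
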